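/- arXiv:1505.04953 — 3 statements merged into one kernel-verified Lean document; each statement's English description precedes it below -/
import Mathlib

section
/- Let u1, u2 : [0,L] → ℝ be C² functions, ν > 0, λ > 0, and H : [0,L] × ℝ × ℝ → ℝ continuous and nondecreasing in its second (r) argument. Suppose -ν u1'' + H(x, u1, u1') + λ u1 ≥ -ν u2'' + H(x, u2, u2') + λ u2 on [0,L], and u1'(0) ≤ u2'(0), u1'(L) ≥ u2'(L) (i.e., the outward oriented derivatives at the endpoints satisfy the Kirchhoff-type inequality). Then u1 ≥ u2 on [0,L]. (Interval case of the comparison principle on a network.) -/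
open Set

/-- If `f` is `C¹` and attains its max over `[a,b]` at the left endpoint `a`,
then `deriv f a ≤ 0`. -/
lemma aux_derivR {f : ℝ → ℝ} {a b : ℝ} (hab : a < b) (hf : ContDiff ℝ 1 f)
    (hmax : ∀ x ∈ Icc a b, f x ≤ f a) : deriv f a ≤ 0 := by
  by_contra h
  push_neg at h
  have hc : Continuous (deriv f) := hf.continuous_deriv le_rfl
  have hev : ∀ᶠ x in nhds a, 0 < deriv f x :=
    (hc.continuousAt (x := a)).eventually (eventually_gt_nhds h)
  obtain ⟨ε, hε, hball⟩ := Metric.eventually_nhds_iff.mp hev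
  set c := min (a + ε / 2) b with hc_def
  have hac : a < c := lt_min (by linarith) hab
  have hcb : c ≤ b := min_le_right _ _
  have hmono : StrictMonoOn f (Icc a c) := by
    apply strictMonoOn_of_deriv_pos (convex_Icc a c) hf.continuous.continuousOn
    intro x hx
    rw [interior_Icc] at hx
    apply hball
    rw [Real.dist_eq, abs_of_nonneg (by linarith [hx.1])]
    have : x < a + ε / 2 := lt_of_lt_of_le hx.2 (min_le_left _ _)
    linarith
  have hlt : f a < f c :=
    hmono (left_mem_Icc.mpr hac.le) (right_mem_Icc.mpr hac.le) hac
  exact absurd (hmax c ⟨hac.le, hcb⟩) (not_le.mpr hlt)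

/-- If `f` is `C¹` and attains its max over `[a,b]` at the right endpoint `b`,
then `deriv f b ≥ 0`. -/
lemma aux_derivL {f : ℝ → ℝ} {a b : ℝ} (hab : a < b) (hf : ContDiff ℝ 1 f)
    (hmax : ∀ x ∈ Icc a b, f x ≤ f b) : 0 ≤ deriv f b := by
  by_contra h
  push_neg at h
  have hc : Continuous (deriv f) := hf.continuous_deriv le_rfl
  have hev : ∀ᶠ x in nhds b, deriv f x < 0 :=
    (hc.continuousAt (x := b)).eventually (eventually_lt_nhds h)
  obtain ⟨ε, hε, hball⟩ := Metric.eventually_nhds_iff.mp hev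
  set c := max (b - ε / 2) a with hc_def
  have hcb : c < b := max_lt (by linarith) hab
  have hac : a ≤ c := le_max_right _ _
  have hanti : StrictAntiOn f (Icc c b) := by
    apply strictAntiOn_of_deriv_neg (convex_Icc c b) hf.continuous.continuousOn
    intro x hx
    rw [interior_Icc] at hx
    apply hball
    rw [Real.dist_eq, abs_of_nonpos (by linarith [hx.2])]
    have : b - ε / 2 < x := lt_of_le_of_lt (le_max_left _ _) hx.1
    linarith
  have hlt : f b < f c :=
    hanti (left_mem_Icc.mpr hcb.le) (right_mem_Icc.mpr hcb.le) hcb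
  exact absurd (hmax c ⟨hac, hcb.le⟩) (not_le.mpr hlt)

/-- Second-order condition at a left-endpoint max with vanishing derivative. -/
lemma aux_deriv2R {f : ℝ → ℝ} {a b : ℝ} (hab : a < b) (hf : ContDiff ℝ 2 f)
    (hmax : ∀ x ∈ Icc a b, f x ≤ f a) (hda : deriv f a = 0) :
    deriv (deriv f) a ≤ 0 := by
  by_contra h
  push_neg at h
  have hdf : ContDiff ℝ 1 (deriv f) := by
    have h2 := hf
    rw [show (2 : WithTop ℕ∞) = 1 + 1 by norm_num, contDiff_succ_iff_deriv] at h2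
    exact h2.2.2
  have hc : Continuous (deriv (deriv f)) := hdf.continuous_deriv le_rfl
  have hev : ∀ᶠ x in nhds a, 0 < deriv (deriv f) x :=
    (hc.continuousAt (x := a)).eventually (eventually_gt_nhds h)
  obtain ⟨ε, hε, hball⟩ := Metric.eventually_nhds_iff.mp hev
  set c := min (a + ε / 2) b with hc_def
  have hac : a < c := lt_min (by linarith) hab
  have hcb : c ≤ b := min_le_right _ _
  have hmono : StrictMonoOn (deriv f) (Icc a c) := by
    apply strictMonoOn_of_deriv_pos (convex_Icc a c) hdf.continuous.continuousOn
    intro x hx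
    rw [interior_Icc] at hx
    apply hball
    rw [Real.dist_eq, abs_of_nonneg (by linarith [hx.1])]
    have : x < a + ε / 2 := lt_of_lt_of_le hx.2 (min_le_left _ _)
    linarith
  have hmono2 : StrictMonoOn f (Icc a c) := by
    apply strictMonoOn_of_deriv_pos (convex_Icc a c) hf.continuous.continuousOn
    intro x hx
    rw [interior_Icc] at hx
    have := hmono (left_mem_Icc.mpr hac.le) ⟨hx.1.le, hx.2.le⟩ hx.1
    rw [hda] at this
    exact this
  have hlt : f a < f c :=
    hmono2 (left_mem_Icc.mpr hac.le) (right_mem_Icc.mpr hac.le) hac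
  exact absurd (hmax c ⟨hac.le, hcb⟩) (not_le.mpr hlt)

/-- Second-order condition at a right-endpoint max with vanishing derivative. -/
lemma aux_deriv2L {f : ℝ → ℝ} {a b : ℝ} (hab : a < b) (hf : ContDiff ℝ 2 f)
    (hmax : ∀ x ∈ Icc a b, f x ≤ f b) (hdb : deriv f b = 0) :
    deriv (deriv f) b ≤ 0 := by
  by_contra h
  push_neg at h
  have hdf : ContDiff ℝ 1 (deriv f) := by
    have h2 := hf
    rw [show (2 : WithTop ℕ∞) = 1 + 1 by norm_num, contDiff_succ_iff_deriv] at h2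
    exact h2.2.2
  have hc : Continuous (deriv (deriv f)) := hdf.continuous_deriv le_rfl
  have hev : ∀ᶠ x in nhds b, 0 < deriv (deriv f) x :=
    (hc.continuousAt (x := b)).eventually (eventually_gt_nhds h)
  obtain ⟨ε, hε, hball⟩ := Metric.eventually_nhds_iff.mp hev
  set c := max (b - ε / 2) a with hc_def
  have hcb : c < b := max_lt (by linarith) hab
  have hac : a ≤ c := le_max_right _ _
  have hmono : StrictMonoOn (deriv f) (Icc c b) := by
    apply strictMonoOn_of_deriv_pos (convex_Icc c b) hdf.continuous.continuousOn
    intro x hx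
    rw [interior_Icc] at hx
    apply hball
    rw [Real.dist_eq, abs_of_nonpos (by linarith [hx.2])]
    have : b - ε / 2 < x := lt_of_le_of_lt (le_max_left _ _) hx.1
    linarith
  have hanti : StrictAntiOn f (Icc c b) := by
    apply strictAntiOn_of_deriv_neg (convex_Icc c b) hf.continuous.continuousOn
    intro x hx
    rw [interior_Icc] at hx
    have := hmono ⟨hx.1.le, hx.2.le⟩ (right_mem_Icc.mpr hcb.le) hx.2
    rw [hdb] at this
    exact this
  have hlt : f b < f c :=
    hanti (left_mem_Icc.mpr hcb.le) (right_mem_Icc.mpr hcb.le) hcb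
  exact absurd (hmax c ⟨hac, hcb.le⟩) (not_le.mpr hlt)

/-- Comparison principle on an interval (one-edge network): if `u1` is a supersolution
relative to `u2` for `-ν u'' + H(x,u,u') + λ u` and the oriented (Kirchhoff-type)
derivative inequalities hold at both endpoints, then `u1 ≥ u2` on `[0,L]`. -/
theorem stmt_0 (L ν lam : ℝ) (hL : 0 < L) (hν : 0 < ν) (hlam : 0 < lam)
    (H : ℝ → ℝ → ℝ → ℝ)
    (hHcont : Continuous fun p : ℝ × ℝ × ℝ => H p.1 p.2.1 p.2.2)
    (hHmono : ∀ x p : ℝ, Monotone fun r => H x r p)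
    (u1 u2 : ℝ → ℝ) (hu1 : ContDiff ℝ 2 u1) (hu2 : ContDiff ℝ 2 u2)
    (hineq : ∀ x ∈ Icc (0:ℝ) L,
      -ν * deriv (deriv u1) x + H x (u1 x) (deriv u1 x) + lam * u1 x ≥
      -ν * deriv (deriv u2) x + H x (u2 x) (deriv u2 x) + lam * u2 x)
    (h0 : deriv u1 0 ≤ deriv u2 0)
    (hLend : deriv u2 L ≤ deriv u1 L) :
    ∀ x ∈ Icc (0:ℝ) L, u2 x ≤ u1 x := by
  by_contra hcon
  push_neg at hcon
  obtain ⟨y, hy, hy2⟩ := hcon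
  set w : ℝ → ℝ := fun x => u2 x - u1 x with hw_def
  have hwC : ContDiff ℝ 2 w := hu2.sub hu1
  have hwC1 : ContDiff ℝ 1 w := hwC.of_le (by norm_num)
  have hd1 : Differentiable ℝ u1 := hu1.differentiable (by norm_num)
  have hd2 : Differentiable ℝ u2 := hu2.differentiable (by norm_num)
  have hdd1 : Differentiable ℝ (deriv u1) := by
    have h2 := hu1
    rw [show (2 : WithTop ℕ∞) = 1 + 1 by norm_num, contDiff_succ_iff_deriv] at h2
    exact h2.2.2.differentiable one_ne_zero
  have hdd2 : Differentiable ℝ (deriv u2) := by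
    have h2 := hu2
    rw [show (2 : WithTop ℕ∞) = 1 + 1 by norm_num, contDiff_succ_iff_deriv] at h2
    exact h2.2.2.differentiable one_ne_zero
  have hdw : deriv w = fun x => deriv u2 x - deriv u1 x := by
    funext x
    exact deriv_fun_sub (hd2 x) (hd1 x)
  have hddw : ∀ x, deriv (deriv w) x = deriv (deriv u2) x - deriv (deriv u1) x := by
    intro x
    rw [hdw]
    exact deriv_fun_sub (hdd2 x) (hdd1 x)
  obtain ⟨x0, hx0, hmaxOn⟩ := isCompact_Icc.exists_isMaxOn (nonempty_Icc.mpr hL.le)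
    hwC.continuous.continuousOn
  have hmax : ∀ x ∈ Icc (0:ℝ) L, w x ≤ w x0 := fun x hx => hmaxOn hx
  have hwx0 : 0 < w x0 := lt_of_lt_of_le (by simp only [hw_def]; linarith) (hmax y hy)
  -- first derivative vanishes at x0
  have h1 : deriv w x0 ≤ 0 := by
    rcases eq_or_lt_of_le hx0.2 with heq | hlt
    · rw [heq, hdw]; simp only; linarith
    · exact aux_derivR hlt hwC1 (fun x hx => hmax x ⟨le_trans hx0.1 hx.1, hx.2⟩)
  have h2 : 0 ≤ deriv w x0 := by
    rcases eq_or_lt_of_le hx0.1 with heq | hlt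
    · rw [← heq, hdw]; simp only; linarith
    · exact aux_derivL hlt hwC1 (fun x hx => hmax x ⟨hx.1, le_trans hx.2 hx0.2⟩)
  have hdw0 : deriv w x0 = 0 := le_antisymm h1 h2
  -- second derivative is ≤ 0 at x0
  have hdd : deriv (deriv w) x0 ≤ 0 := by
    rcases eq_or_lt_of_le hx0.2 with heq | hlt
    · subst heq
      exact aux_deriv2L hL hwC hmax hdw0
    · exact aux_deriv2R hlt hwC (fun x hx => hmax x ⟨le_trans hx0.1 hx.1, hx.2⟩) hdw0
  -- derive a contradiction from the PDE inequality at x0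
  have hp : deriv u2 x0 = deriv u1 x0 := by
    have := hdw0
    rw [hdw] at this
    simp only at this
    linarith
  have hu12 : u1 x0 ≤ u2 x0 := by
    have := hwx0
    simp only [hw_def] at this
    linarith
  have hH : H x0 (u1 x0) (deriv u1 x0) ≤ H x0 (u2 x0) (deriv u1 x0) :=
    hHmono x0 (deriv u1 x0) hu12
  have hq := hineq x0 hx0
  rw [hp] at hq
  have hdd' := hddw x0
  have hw0' : 0 < u2 x0 - u1 x0 := by
    have := hwx0; simpa [hw_def] using this
  nlinarith [hq, hdd, hdd', hH, hw0', hν.le, hlam.le]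
end

section
/- Uniqueness of the ergodic constant: suppose (u1, ρ1) and (u2, ρ2) are two pairs in C²([0,L]) × ℝ solving -ν u'' + H(x, u') + ρ = f(x) on [0,L] with Neumann conditions u'(0) = u'(L) = 0, where ν > 0 and H is continuous. Then ρ1 = ρ2. -/
open Set

lemma my_left (f : ℝ → ℝ) (hf : ContDiff ℝ 2 f) {a b : ℝ} (hab : a < b)
    (hd : deriv f a = 0) (hmax : IsMaxOn f (Icc a b) a) :
    deriv (deriv f) a ≤ 0 := by
  by_contra h
  push_neg at h
  have h' : ContDiff ℝ ((1:ℕ∞)+1) f := by exact_mod_cast hf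
  have hf1 : ContDiff ℝ 1 (deriv f) := (contDiff_succ_iff_deriv.mp h').2.2
  have hfd : Differentiable ℝ f := hf.differentiable (by norm_num)
  have hfd1 : Differentiable ℝ (deriv f) := hf1.differentiable (by norm_num)
  have hc2 : Continuous (deriv (deriv f)) := hf1.continuous_deriv le_rfl
  -- neighborhood where second derivative positive
  have hmem : (deriv (deriv f)) ⁻¹' Ioi 0 ∈ nhds a :=
    hc2.continuousAt.preimage_mem_nhds (Ioi_mem_nhds h)
  obtain ⟨δ, hδ, hball⟩ := Metric.mem_nhds_iff.mp hmem
  set t := min (a + δ/2) b with ht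
  have hat : a < t := lt_min (by linarith) hab
  have htb : t ≤ b := min_le_right _ _
  have hsub : ∀ x ∈ Icc a t, 0 < deriv (deriv f) x := by
    intro x hx
    have : x ∈ Metric.ball a δ := by
      have h1 : x ≤ a + δ/2 := le_trans hx.2 (min_le_left _ _)
      simp only [Metric.mem_ball, Real.dist_eq]
      rw [abs_lt]; constructor <;> [linarith [hx.1]; linarith]
    exact hball this
  have hmono : StrictMonoOn (deriv f) (Icc a t) := by
    apply strictMonoOn_of_deriv_pos (convex_Icc a t) (hfd1.continuous.continuousOn)
    intro x hx
    rw [interior_Icc] at hx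
    exact hsub x ⟨hx.1.le, hx.2.le⟩
  have hpos : ∀ x ∈ Ioo a t, 0 < deriv f x := by
    intro x hx
    have := hmono ⟨le_refl a, hat.le⟩ ⟨hx.1.le, hx.2.le⟩ hx.1
    rwa [hd] at this
  have hmono2 : StrictMonoOn f (Icc a t) := by
    apply strictMonoOn_of_deriv_pos (convex_Icc a t) (hfd.continuous.continuousOn)
    intro x hx
    rw [interior_Icc] at hx
    exact hpos x hx
  have := hmono2 ⟨le_refl a, hat.le⟩ ⟨hat.le, le_refl t⟩ hat
  have := hmax (Set.mem_Icc.mpr ⟨hat.le, htb⟩)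
  simp only [mem_setOf_eq] at this
  linarith

lemma my_right (f : ℝ → ℝ) (hf : ContDiff ℝ 2 f) {a b : ℝ} (hab : a < b)
    (hd : deriv f b = 0) (hmax : IsMaxOn f (Icc a b) b) :
    deriv (deriv f) b ≤ 0 := by
  by_contra h
  push_neg at h
  have h' : ContDiff ℝ ((1:ℕ∞)+1) f := by exact_mod_cast hf
  have hf1 : ContDiff ℝ 1 (deriv f) := (contDiff_succ_iff_deriv.mp h').2.2
  have hfd : Differentiable ℝ f := hf.differentiable (by norm_num)
  have hfd1 : Differentiable ℝ (deriv f) := hf1.differentiable (by norm_num)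
  have hc2 : Continuous (deriv (deriv f)) := hf1.continuous_deriv le_rfl
  have hmem : (deriv (deriv f)) ⁻¹' Ioi 0 ∈ nhds b :=
    hc2.continuousAt.preimage_mem_nhds (Ioi_mem_nhds h)
  obtain ⟨δ, hδ, hball⟩ := Metric.mem_nhds_iff.mp hmem
  set t := max (b - δ/2) a with ht
  have hat : t < b := max_lt (by linarith) hab
  have htb : a ≤ t := le_max_right _ _
  have hsub : ∀ x ∈ Icc t b, 0 < deriv (deriv f) x := by
    intro x hx
    have : x ∈ Metric.ball b δ := by
      have h1 : b - δ/2 ≤ x := le_trans (le_max_left _ _) hx.1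
      simp only [Metric.mem_ball, Real.dist_eq]
      rw [abs_lt]; constructor <;> [linarith [hx.2]; linarith [hx.2]]
    exact hball this
  have hmono : StrictMonoOn (deriv f) (Icc t b) := by
    apply strictMonoOn_of_deriv_pos (convex_Icc t b) (hfd1.continuous.continuousOn)
    intro x hx
    rw [interior_Icc] at hx
    exact hsub x ⟨hx.1.le, hx.2.le⟩
  have hneg : ∀ x ∈ Ioo t b, deriv f x < 0 := by
    intro x hx
    have := hmono ⟨hx.1.le, hx.2.le⟩ ⟨hat.le, le_refl b⟩ hx.2
    rwa [hd] at this
  have hanti : StrictAntiOn f (Icc t b) := by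
    apply strictAntiOn_of_deriv_neg (convex_Icc t b) (hfd.continuous.continuousOn)
    intro x hx
    rw [interior_Icc] at hx
    exact hneg x hx
  have := hanti ⟨le_refl t, hat.le⟩ ⟨hat.le, le_refl b⟩ hat
  have := hmax (Set.mem_Icc.mpr ⟨htb, hat.le⟩)
  simp only [mem_setOf_eq] at this
  linarith

lemma my_key (L ν ρ1 ρ2 : ℝ) (hL : 0 < L) (hν : 0 < ν)
    (H : ℝ → ℝ → ℝ)
    (f : ℝ → ℝ)
    (u1 u2 : ℝ → ℝ) (hu1 : ContDiff ℝ 2 u1) (hu2 : ContDiff ℝ 2 u2)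
    (heq1 : ∀ x ∈ Icc (0:ℝ) L,
      -ν * deriv (deriv u1) x + H x (deriv u1 x) + ρ1 = f x)
    (heq2 : ∀ x ∈ Icc (0:ℝ) L,
      -ν * deriv (deriv u2) x + H x (deriv u2 x) + ρ2 = f x)
    (hN1 : deriv u1 0 = 0 ∧ deriv u1 L = 0)
    (hN2 : deriv u2 0 = 0 ∧ deriv u2 L = 0) :
    ρ1 ≤ ρ2 := by
  set w := fun x => u1 x - u2 x with hw
  have hwC : ContDiff ℝ 2 w := hu1.sub hu2
  have hd1 : Differentiable ℝ u1 := hu1.differentiable (by norm_num)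
  have hd2 : Differentiable ℝ u2 := hu2.differentiable (by norm_num)
  have h1' : ContDiff ℝ ((1:ℕ∞)+1) u1 := by exact_mod_cast hu1
  have h2' : ContDiff ℝ ((1:ℕ∞)+1) u2 := by exact_mod_cast hu2
  have hdd1 : Differentiable ℝ (deriv u1) :=
    ((contDiff_succ_iff_deriv.mp h1').2.2).differentiable (by norm_num)
  have hdd2 : Differentiable ℝ (deriv u2) :=
    ((contDiff_succ_iff_deriv.mp h2').2.2).differentiable (by norm_num)
  have hw' : deriv w = fun x => deriv u1 x - deriv u2 x := by
    funext x; exact deriv_sub (hd1 x) (hd2 x)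
  have hw'' : ∀ x, deriv (deriv w) x = deriv (deriv u1) x - deriv (deriv u2) x := by
    intro x; rw [hw']; exact deriv_sub (hdd1 x) (hdd2 x)
  -- max point
  obtain ⟨x0, hx0, hmax⟩ := isCompact_Icc.exists_isMaxOn (nonempty_Icc.mpr hL.le)
    ((hd1.continuous.sub hd2.continuous).continuousOn : ContinuousOn w (Icc 0 L))
  -- at x0: deriv w x0 = 0 and deriv (deriv w) x0 ≤ 0
  have key : deriv w x0 = 0 ∧ deriv (deriv w) x0 ≤ 0 := by
    rcases eq_or_lt_of_le hx0.2 with hxL | hxL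
    · -- x0 = L
      subst hxL
      have hdz : deriv w x0 = 0 := by rw [hw']; simp [hN1.2, hN2.2]
      exact ⟨hdz, my_right w hwC hL hdz hmax⟩
    · rcases eq_or_lt_of_le hx0.1 with hx0' | hx0'
      · -- x0 = 0
        have hdz : deriv w x0 = 0 := by rw [hw']; simp [← hx0', hN1.1, hN2.1]
        refine ⟨hdz, my_left w hwC hxL hdz ?_⟩
        exact hmax.on_subset (Icc_subset_Icc (le_of_eq hx0') le_rfl)
      · -- interior
        have hloc : IsLocalMax w x0 :=
          hmax.isLocalMax (Icc_mem_nhds hx0' hxL)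
        have hdz : deriv w x0 = 0 := hloc.deriv_eq_zero
        refine ⟨hdz, my_left w hwC hxL hdz ?_⟩
        exact hmax.on_subset (Icc_subset_Icc hx0.1 le_rfl)
  obtain ⟨hdz, hddz⟩ := key
  have heqd : deriv u1 x0 = deriv u2 x0 := by
    have h := hdz; rw [hw'] at h; exact sub_eq_zero.mp h
  have hdd : deriv (deriv u1) x0 - deriv (deriv u2) x0 ≤ 0 := by
    rw [← hw'' x0]; exact hddz
  have e1 := heq1 x0 hx0
  have e2 := heq2 x0 hx0
  rw [heqd] at e1
  nlinarith [mul_nonneg hν.le (neg_nonneg.mpr hdd)]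

/-- Uniqueness of the ergodic constant: two C² solutions of
`-ν u'' + H(x,u') + ρ = f` on `[0,L]` with Neumann conditions have the same `ρ`. -/
theorem stmt_6 (L ν ρ1 ρ2 : ℝ) (hL : 0 < L) (hν : 0 < ν)
    (H : ℝ → ℝ → ℝ) (hHcont : Continuous fun p : ℝ × ℝ => H p.1 p.2)
    (f : ℝ → ℝ) (hf : Continuous f)
    (u1 u2 : ℝ → ℝ) (hu1 : ContDiff ℝ 2 u1) (hu2 : ContDiff ℝ 2 u2)
    (heq1 : ∀ x ∈ Icc (0:ℝ) L,
      -ν * deriv (deriv u1) x + H x (deriv u1 x) + ρ1 = f x)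
    (heq2 : ∀ x ∈ Icc (0:ℝ) L,
      -ν * deriv (deriv u2) x + H x (deriv u2 x) + ρ2 = f x)
    (hN1 : deriv u1 0 = 0 ∧ deriv u1 L = 0)
    (hN2 : deriv u2 0 = 0 ∧ deriv u2 L = 0) :
    ρ1 = ρ2 :=
  le_antisymm
    (my_key L ν ρ1 ρ2 hL hν H f u1 u2 hu1 hu2 heq1 heq2 hN1 hN2)
    (my_key L ν ρ2 ρ1 hL hν H f u2 u1 hu2 hu1 heq2 heq1 hN2 hN1)
end

section
/- Uniqueness for the stationary MFG system on an interval under monotone coupling: in the setting of the cross-duality identity, assume additionally H(x,·) strictly convex for each x, m1, m2 > 0 on [0,L], and V strictly increasing (so that ∫ (V(m1)-V(m2))(m1-m2) dx ≤ 0 implies m1 = m2). Then m1 = m2, u1 = u2, and ρ1 = ρ2. -/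
open Set intervalIntegral

lemma aux_bregman_pos {f : ℝ → ℝ} (hf : StrictConvexOn ℝ Set.univ f)
    (hd : ∀ x : ℝ, DifferentiableAt ℝ f x) {p q : ℝ} (hpq : p ≠ q) :
    0 < f q - f p - deriv f p * (q - p) := by
  rcases hpq.lt_or_gt with h | h
  · have hs := hf.deriv_lt_slope (mem_univ p) (mem_univ q) h (hd p)
    rw [slope_def_field] at hs
    have hqp' : 0 < q - p := by linarith
    have := (lt_div_iff₀ hqp').mp hs
    nlinarith
  · have hs := hf.slope_lt_deriv (mem_univ q) (mem_univ p) h (hd p)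
    rw [slope_def_field] at hs
    have hpq' : 0 < p - q := by linarith
    have := (div_lt_iff₀ hpq').mp hs
    nlinarith

lemma aux_bregman_nonneg {f : ℝ → ℝ} (hf : StrictConvexOn ℝ Set.univ f)
    (hd : ∀ x : ℝ, DifferentiableAt ℝ f x) (p q : ℝ) :
    0 ≤ f q - f p - deriv f p * (q - p) := by
  rcases eq_or_ne p q with rfl | h
  · simp
  · exact (aux_bregman_pos hf hd h).le

lemma aux_mono_nonneg {V : ℝ → ℝ} (hV : StrictMono V) (a b : ℝ) :
    0 ≤ (V a - V b) * (a - b) := by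
  rcases lt_trichotomy a b with h | h | h
  · have := hV h; nlinarith
  · subst h; simp
  · have := hV h; nlinarith

lemma aux_mono_pos {V : ℝ → ℝ} (hV : StrictMono V) {a b : ℝ} (hab : a ≠ b) :
    0 < (V a - V b) * (a - b) := by
  rcases hab.lt_or_gt with h | h
  · have := hV h; nlinarith
  · have := hV h; nlinarith

lemma aux_hasDerivAt_snd {F : ℝ × ℝ → ℝ} (hF : ContDiff ℝ 2 F) (x p : ℝ) :
    HasDerivAt (fun q => F (x, q)) (fderiv ℝ F (x, p) (0, 1)) p := by
  have h1 : HasDerivAt (fun q : ℝ => ((x, q) : ℝ × ℝ)) ((0 : ℝ), (1 : ℝ)) p :=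
    (hasDerivAt_const p x).prodMk (hasDerivAt_id p)
  exact ((hF.differentiable (by norm_num) (x, p)).hasFDerivAt).comp_hasDerivAt p h1

lemma aux_Hp_contDiff {F : ℝ × ℝ → ℝ} (hF : ContDiff ℝ 2 F) {g : ℝ → ℝ}
    (hg : ContDiff ℝ 1 g) :
    ContDiff ℝ 1 (fun x => fderiv ℝ F (x, g x) (0, 1)) := by
  have h1 : ContDiff ℝ 1 (fderiv ℝ F) := hF.fderiv_right (by norm_num)
  exact (h1.comp (contDiff_id.prodMk hg)).clm_apply contDiff_const

lemma aux_deriv_contDiff {f : ℝ → ℝ} (hf : ContDiff ℝ 2 f) : ContDiff ℝ 1 (deriv f) := by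
  have h : ContDiff ℝ (1 + 1) f := by norm_num; exact hf
  exact (contDiff_succ_iff_deriv.mp h).2.2

/-- Uniqueness for the stationary MFG system on `[0,L]` under a strictly monotone
coupling `V` and strictly convex Hamiltonian: two solutions coincide on `[0,L]`
and have the same ergodic constant. -/
theorem stmt_12 (L ν ρ1 ρ2 : ℝ) (hL : 0 < L) (hν : 0 < ν)
    (H : ℝ → ℝ → ℝ) (hH : ContDiff ℝ 2 fun p : ℝ × ℝ => H p.1 p.2)
    (hHconv : ∀ x : ℝ, StrictConvexOn ℝ Set.univ (H x))
    (V : ℝ → ℝ) (hV : ContDiff ℝ 1 V) (hVmono : StrictMono V)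
    (u1 u2 m1 m2 : ℝ → ℝ)
    (hu1 : ContDiff ℝ 2 u1) (hu2 : ContDiff ℝ 2 u2)
    (hm1 : ContDiff ℝ 2 m1) (hm2 : ContDiff ℝ 2 m2)
    (hm1pos : ∀ x ∈ Icc (0:ℝ) L, 0 < m1 x)
    (hm2pos : ∀ x ∈ Icc (0:ℝ) L, 0 < m2 x)
    (hHJB1 : ∀ x ∈ Icc (0:ℝ) L,
      -ν * deriv (deriv u1) x + H x (deriv u1 x) + ρ1 = V (m1 x))
    (hHJB2 : ∀ x ∈ Icc (0:ℝ) L,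
      -ν * deriv (deriv u2) x + H x (deriv u2 x) + ρ2 = V (m2 x))
    (hFP1 : ∀ x ∈ Icc (0:ℝ) L,
      deriv (fun y => ν * deriv m1 y + deriv (H y) (deriv u1 y) * m1 y) x = 0)
    (hFP2 : ∀ x ∈ Icc (0:ℝ) L,
      deriv (fun y => ν * deriv m2 y + deriv (H y) (deriv u2 y) * m2 y) x = 0)
    (hNu1 : deriv u1 0 = 0 ∧ deriv u1 L = 0)
    (hNu2 : deriv u2 0 = 0 ∧ deriv u2 L = 0)
    (hflux1 : ∀ v ∈ ({0, L} : Set ℝ),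
      ν * deriv m1 v + deriv (H v) (deriv u1 v) * m1 v = 0)
    (hflux2 : ∀ v ∈ ({0, L} : Set ℝ),
      ν * deriv m2 v + deriv (H v) (deriv u2 v) * m2 v = 0)
    (hm1int : ∫ x in (0:ℝ)..L, m1 x = 1) (hm2int : ∫ x in (0:ℝ)..L, m2 x = 1)
    (hu1int : ∫ x in (0:ℝ)..L, u1 x = 0) (hu2int : ∫ x in (0:ℝ)..L, u2 x = 0) :
    (∀ x ∈ Icc (0:ℝ) L, m1 x = m2 x ∧ u1 x = u2 x) ∧ ρ1 = ρ2 := by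
  obtain ⟨hN10, hN1L⟩ := hNu1
  obtain ⟨hN20, hN2L⟩ := hNu2
  set F : ℝ × ℝ → ℝ := fun p => H p.1 p.2 with hFdef
  set Hp : ℝ → ℝ → ℝ := fun x p => fderiv ℝ F (x, p) (0, 1) with hHpdef
  have hHp : ∀ x p : ℝ, deriv (H x) p = Hp x p := fun x p =>
    (aux_hasDerivAt_snd hH x p).deriv
  -- smoothness basics
  have hg1 : ContDiff ℝ 1 (deriv u1) := aux_deriv_contDiff hu1
  have hg2 : ContDiff ℝ 1 (deriv u2) := aux_deriv_contDiff hu2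
  have hdm1 : ContDiff ℝ 1 (deriv m1) := aux_deriv_contDiff hm1
  have hdm2 : ContDiff ℝ 1 (deriv m2) := aux_deriv_contDiff hm2
  have hm1' : ContDiff ℝ 1 m1 := hm1.of_le (by norm_num)
  have hm2' : ContDiff ℝ 1 m2 := hm2.of_le (by norm_num)
  have hHp1 : ContDiff ℝ 1 (fun x => Hp x (deriv u1 x)) := aux_Hp_contDiff hH hg1
  have hHp2 : ContDiff ℝ 1 (fun x => Hp x (deriv u2 x)) := aux_Hp_contDiff hH hg2
  have hHxdiff : ∀ x : ℝ, ∀ p : ℝ, DifferentiableAt ℝ (H x) p := by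
    intro x p
    exact (aux_hasDerivAt_snd hH x p).differentiableAt
  -- flux functions
  set J1 : ℝ → ℝ := fun y => ν * deriv m1 y + Hp y (deriv u1 y) * m1 y with hJ1def
  set J2 : ℝ → ℝ := fun y => ν * deriv m2 y + Hp y (deriv u2 y) * m2 y with hJ2def
  have hJ1eq : (fun y => ν * deriv m1 y + deriv (H y) (deriv u1 y) * m1 y) = J1 := by
    funext y; rw [hHp]
  have hJ2eq : (fun y => ν * deriv m2 y + deriv (H y) (deriv u2 y) * m2 y) = J2 := by
    funext y; rw [hHp]
  rw [hJ1eq] at hFP1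
  rw [hJ2eq] at hFP2
  have hflux1' : J1 0 = 0 := by
    have := hflux1 0 (by simp); rw [hHp] at this; exact this
  have hflux2' : J2 0 = 0 := by
    have := hflux2 0 (by simp); rw [hHp] at this; exact this
  have hJ1c : ContDiff ℝ 1 J1 := (contDiff_const.mul hdm1).add (hHp1.mul hm1')
  have hJ2c : ContDiff ℝ 1 J2 := (contDiff_const.mul hdm2).add (hHp2.mul hm2')
  have hJ1zero : ∀ x ∈ Icc (0:ℝ) L, J1 x = 0 := by
    have hc := constant_of_has_deriv_right_zero (f := J1) (a := 0) (b := L)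
      (hJ1c.continuous.continuousOn) (fun x hx => by
        have hd := (hJ1c.differentiable one_ne_zero x).hasDerivAt
        rw [hFP1 x (Ico_subset_Icc_self hx)] at hd
        exact hd.hasDerivWithinAt)
    intro x hx; rw [hc x hx, hflux1']
  have hJ2zero : ∀ x ∈ Icc (0:ℝ) L, J2 x = 0 := by
    have hc := constant_of_has_deriv_right_zero (f := J2) (a := 0) (b := L)
      (hJ2c.continuous.continuousOn) (fun x hx => by
        have hd := (hJ2c.differentiable one_ne_zero x).hasDerivAt
        rw [hFP2 x (Ico_subset_Icc_self hx)] at hd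
        exact hd.hasDerivWithinAt)
    intro x hx; rw [hc x hx, hflux2']
  -- the cross term function G
  set G : ℝ → ℝ := fun y => -ν * ((deriv u1 y - deriv u2 y) * (m1 y - m2 y)) with hGdef
  have hGderiv : ∀ x : ℝ, HasDerivAt G
      (-ν * ((deriv (deriv u1) x - deriv (deriv u2) x) * (m1 x - m2 x)
        + (deriv u1 x - deriv u2 x) * (deriv m1 x - deriv m2 x))) x := by
    intro x
    have h1 : HasDerivAt (fun y => deriv u1 y - deriv u2 y)
        (deriv (deriv u1) x - deriv (deriv u2) x) x :=
      ((hg1.differentiable one_ne_zero x).hasDerivAt).sub ((hg2.differentiable one_ne_zero x).hasDerivAt)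
    have h2 : HasDerivAt (fun y => m1 y - m2 y) (deriv m1 x - deriv m2 x) x :=
      ((hm1'.differentiable one_ne_zero x).hasDerivAt).sub ((hm2'.differentiable one_ne_zero x).hasDerivAt)
    exact (h1.mul h2).const_mul (-ν)
  have hGc : ContDiff ℝ 1 G := contDiff_const.mul ((hg1.sub hg2).mul (hm1'.sub hm2'))
  -- the nonnegative integrand
  set Φ : ℝ → ℝ := fun x =>
    (V (m1 x) - V (m2 x)) * (m1 x - m2 x)
    + m1 x * (H x (deriv u2 x) - H x (deriv u1 x) - Hp x (deriv u1 x) * (deriv u2 x - deriv u1 x))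
    + m2 x * (H x (deriv u1 x) - H x (deriv u2 x) - Hp x (deriv u2 x) * (deriv u1 x - deriv u2 x))
    with hΦdef
  have hΦeq : ∀ x ∈ Icc (0:ℝ) L, Φ x = deriv G x + (ρ1 - ρ2) * (m1 x - m2 x) := by
    intro x hx
    have e1 := hHJB1 x hx
    have e2 := hHJB2 x hx
    have f1 := hJ1zero x hx
    have f2 := hJ2zero x hx
    rw [hJ1def] at f1
    rw [hJ2def] at f2
    rw [(hGderiv x).deriv, hΦdef]
    simp only
    linear_combination (-(m1 x - m2 x)) * e1 + (m1 x - m2 x) * e2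
      + (deriv u1 x - deriv u2 x) * f1 - (deriv u1 x - deriv u2 x) * f2
  -- continuity of Φ
  have hH1c : Continuous fun x => H x (deriv u1 x) :=
    hH.continuous.comp (continuous_id.prodMk hg1.continuous)
  have hH2c : Continuous fun x => H x (deriv u2 x) :=
    hH.continuous.comp (continuous_id.prodMk hg2.continuous)
  have hΦcont : Continuous Φ := by
    rw [hΦdef]
    apply Continuous.add
    apply Continuous.add
    · exact ((hV.continuous.comp hm1'.continuous).sub
        (hV.continuous.comp hm2'.continuous)).mul (hm1'.continuous.sub hm2'.continuous)
    · exact hm1'.continuous.mul (((hH2c.sub hH1c).sub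
        (hHp1.continuous.mul (hg2.continuous.sub hg1.continuous))))
    · exact hm2'.continuous.mul (((hH1c.sub hH2c).sub
        (hHp2.continuous.mul (hg1.continuous.sub hg2.continuous))))
  -- the integral of Φ vanishes
  have hint : ∫ x in (0:ℝ)..L, Φ x = 0 := by
    rw [intervalIntegral.integral_congr (g := fun x => deriv G x + (ρ1 - ρ2) * (m1 x - m2 x))
      (by rw [uIcc_of_le hL.le]; exact fun x hx => hΦeq x hx)]
    rw [intervalIntegral.integral_add
      ((hGc.continuous_deriv le_rfl).intervalIntegrable _ _)
      ((show Continuous (fun x => (ρ1 - ρ2) * (m1 x - m2 x)) from continuous_const.mul (hm1'.continuous.sub hm2'.continuous)).intervalIntegrable _ _)]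
    rw [intervalIntegral.integral_deriv_eq_sub
      (fun x _ => (hGc.differentiable one_ne_zero x))
      ((hGc.continuous_deriv le_rfl).intervalIntegrable _ _)]
    rw [intervalIntegral.integral_const_mul,
      intervalIntegral.integral_sub (hm1'.continuous.intervalIntegrable _ _)
        (hm2'.continuous.intervalIntegrable _ _), hm1int, hm2int]
    rw [hGdef]
    simp only [hN1L, hN2L, hN10, hN20]
    ring
  -- Φ is nonnegative on [0,L], with three nonnegative pieces
  have hb1 : ∀ x : ℝ, 0 ≤ H x (deriv u2 x) - H x (deriv u1 x)
      - Hp x (deriv u1 x) * (deriv u2 x - deriv u1 x) := by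
    intro x
    have := aux_bregman_nonneg (hHconv x) (hHxdiff x) (deriv u1 x) (deriv u2 x)
    rwa [hHp x (deriv u1 x)] at this
  have hb2 : ∀ x : ℝ, 0 ≤ H x (deriv u1 x) - H x (deriv u2 x)
      - Hp x (deriv u2 x) * (deriv u1 x - deriv u2 x) := by
    intro x
    have := aux_bregman_nonneg (hHconv x) (hHxdiff x) (deriv u2 x) (deriv u1 x)
    rwa [hHp x (deriv u2 x)] at this
  have hΦnonneg : ∀ x ∈ Icc (0:ℝ) L, 0 ≤ Φ x := by
    intro x hx
    rw [hΦdef]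
    have h1 := aux_mono_nonneg hVmono (m1 x) (m2 x)
    have h2 := mul_nonneg (hm1pos x hx).le (hb1 x)
    have h3 := mul_nonneg (hm2pos x hx).le (hb2 x)
    simp only
    linarith
  -- hence Φ = 0 on [0,L]
  have hΦzero : ∀ x ∈ Icc (0:ℝ) L, Φ x = 0 := by
    intro x hx
    by_contra hne
    have hpos : 0 < Φ x := lt_of_le_of_ne (hΦnonneg x hx) (Ne.symm hne)
    have := intervalIntegral.integral_pos hL (hΦcont.continuousOn)
      (fun y hy => hΦnonneg y (Ioc_subset_Icc_self hy)) ⟨x, hx, hpos⟩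
    rw [hint] at this
    exact lt_irrefl 0 this
  -- extract m1 = m2 and deriv u1 = deriv u2 on [0,L]
  have hme : ∀ x ∈ Icc (0:ℝ) L, m1 x = m2 x := by
    intro x hx
    by_contra hne
    have h1 := aux_mono_pos hVmono hne
    have h2 := mul_nonneg (hm1pos x hx).le (hb1 x)
    have h3 := mul_nonneg (hm2pos x hx).le (hb2 x)
    have hz := hΦzero x hx
    rw [hΦdef] at hz
    simp only at hz
    linarith
  have hge : ∀ x ∈ Icc (0:ℝ) L, deriv u1 x = deriv u2 x := by
    intro x hx
    by_contra hne
    have hbp : 0 < H x (deriv u2 x) - H x (deriv u1 x)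
        - Hp x (deriv u1 x) * (deriv u2 x - deriv u1 x) := by
      have := aux_bregman_pos (hHconv x) (hHxdiff x) hne
      rwa [hHp x (deriv u1 x)] at this
    have h1 := aux_mono_nonneg hVmono (m1 x) (m2 x)
    have h2 := mul_pos (hm1pos x hx) hbp
    have h3 := mul_nonneg (hm2pos x hx).le (hb2 x)
    have hz := hΦzero x hx
    rw [hΦdef] at hz
    simp only at hz
    linarith
  -- u1 - u2 is constant on [0,L]
  have hw : ∀ x ∈ Icc (0:ℝ) L, u1 x - u2 x = u1 0 - u2 0 := by
    apply constant_of_has_deriv_right_zero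
      ((hu1.continuous.sub hu2.continuous).continuousOn)
    intro x hx
    have hd : HasDerivAt (fun y => u1 y - u2 y) (deriv u1 x - deriv u2 x) x :=
      ((hu1.differentiable (by norm_num) x).hasDerivAt).sub
        ((hu2.differentiable (by norm_num) x).hasDerivAt)
    rw [hge x (Ico_subset_Icc_self hx), sub_self] at hd
    exact hd.hasDerivWithinAt
  -- the constant is zero by the normalization
  have hintw : ∫ x in (0:ℝ)..L, (u1 x - u2 x) = 0 := by
    rw [intervalIntegral.integral_sub (hu1.continuous.intervalIntegrable _ _)
      (hu2.continuous.intervalIntegrable _ _), hu1int, hu2int, sub_self]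
  have hc0 : u1 0 - u2 0 = 0 := by
    rw [intervalIntegral.integral_congr (g := fun _ => u1 0 - u2 0)
      (by rw [uIcc_of_le hL.le]; exact fun x hx => hw x hx),
      intervalIntegral.integral_const, smul_eq_mul, sub_zero] at hintw
    rcases mul_eq_zero.mp hintw with h | h
    · exact absurd h (ne_of_gt hL)
    · exact h
  -- ρ1 = ρ2
  have hx0 : L / 2 ∈ Icc (0:ℝ) L := ⟨by linarith, by linarith⟩
  have hnhds : Icc (0:ℝ) L ∈ nhds (L / 2) := Icc_mem_nhds (by linarith) (by linarith)
  have hdd : deriv (deriv u1) (L / 2) = deriv (deriv u2) (L / 2) :=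
    Filter.EventuallyEq.deriv_eq (Filter.eventuallyEq_of_mem hnhds hge)
  have e1 := hHJB1 (L / 2) hx0
  have e2 := hHJB2 (L / 2) hx0
  rw [← hge (L / 2) hx0, ← hme (L / 2) hx0, ← hdd] at e2
  constructor
  · intro x hx
    refine ⟨hme x hx, ?_⟩
    have := hw x hx
    linarith
  · linarith
end
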